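/- Let k be a field, n, m natural numbers, and V ≤ k^n × k^m a linear subspace (a linear relation from k^n to k^m). Let V^⊥ = {(a,b) ∈ k^n × k^m : ⟨a,x⟩ = ⟨b,y⟩ for all (x,y) ∈ V} be its covariant orthogonal complement. Then the doubled relation L(V) = {((x,z),(y,w)) ∈ (k^n ⊕ k^n) × (k^m ⊕ k^m) : (x,y) ∈ V ∧ (z,w) ∈ V^⊥} is Lagrangian with respect to the relation form Ω_{n,m}(((x,z),(y,w)),((x',z'),(y',w'))) = ω_m((y,w),(y',w')) − ω_n((x,z),(x',z')), where ω_n, ω_m are the standard symplectic forms. -/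

import Mathlib

namespace Statement8

variable {k : Type*} [Field k]

/-- Dot product on `k^n`. -/
def dot {n : ℕ} (x y : Fin n → k) : k := ∑ i, x i * y i

/-- The standard symplectic form on `k^n ⊕ k^n`:
`ω((x,z),(x',z')) = ⟨x,z'⟩ − ⟨z,x'⟩`. -/
def sf {n : ℕ} (v w : (Fin n → k) × (Fin n → k)) : k :=
  dot v.1 w.2 - dot v.2 w.1

lemma dot_comm {n : ℕ} (x y : Fin n → k) : dot x y = dot y x := by
  unfold dot; exact Finset.sum_congr rfl fun i _ => mul_comm _ _

/-- The pairing form on `k^n × k^m`. -/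
noncomputable def Bf (n m : ℕ) : LinearMap.BilinForm k ((Fin n → k) × (Fin m → k)) :=
  LinearMap.mk₂ k (fun v w => dot v.1 w.1 - dot v.2 w.2)
    (by intro v v' w; simp [dot, Finset.sum_add_distrib, add_mul]; ring)
    (by intro c v w; simp [dot, Finset.mul_sum, mul_sub, mul_assoc])
    (by intro v w w'; simp [dot, Finset.sum_add_distrib, mul_add]; ring)
    (by intro c v w; simp [dot, Finset.mul_sum, mul_sub, mul_left_comm])

lemma Bf_symm {n m : ℕ} (v w : (Fin n → k) × (Fin m → k)) : Bf n m v w = Bf n m w v := by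
  simp [Bf, dot_comm]

lemma Bf_nondeg {n m : ℕ} : (Bf (k := k) n m).Nondegenerate := by
  refine (LinearMap.IsRefl.nondegenerate_iff_separatingLeft (B := Bf (k := k) n m) (fun v w hw => by rw [Bf_symm]; exact hw)).2 ?_
  intro v hv
  ext1
  · ext i
    have := hv (Pi.single i 1, 0)
    simpa [Bf, dot, Pi.single_apply, Finset.sum_ite_eq'] using this
  · ext i
    have := hv (0, Pi.single i 1)
    simpa [Bf, dot, Pi.single_apply, Finset.sum_ite_eq'] using this

lemma dot_zero {n : ℕ} (x : Fin n → k) : dot x 0 = 0 := by simp [dot]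
lemma zero_dot {n : ℕ} (x : Fin n → k) : dot (0 : Fin n → k) x = 0 := by simp [dot]

/-- The doubled relation
`L(V) = {((x,z),(y,w)) : (x,y) ∈ V ∧ (z,w) ∈ V^⊥}` of a linear relation
`V ≤ k^n × k^m` is Lagrangian with respect to the relation form
`Ω(p,q) = ω_m(p₂,q₂) − ω_n(p₁,q₁)`, where
`V^⊥ = {(a,b) : ⟨a,x⟩ = ⟨b,y⟩ for all (x,y) ∈ V}` is the covariant orthogonal
complement. -/
theorem statement8 (n m : ℕ) (V : Submodule k ((Fin n → k) × (Fin m → k))) :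
    ∀ p : ((Fin n → k) × (Fin n → k)) × ((Fin m → k) × (Fin m → k)),
      ((p.1.1, p.2.1) ∈ V ∧ ∀ q ∈ V, dot p.1.2 q.1 = dot p.2.2 q.2) ↔
        ∀ q : ((Fin n → k) × (Fin n → k)) × ((Fin m → k) × (Fin m → k)),
          ((q.1.1, q.2.1) ∈ V ∧ ∀ r ∈ V, dot q.1.2 r.1 = dot q.2.2 r.2) →
            sf p.2 q.2 - sf p.1 q.1 = 0 := by
  intro p
  constructor
  · rintro ⟨h1, h2⟩ q ⟨hq1, hq2⟩
    have e1 : dot p.1.2 q.1.1 = dot p.2.2 q.2.1 := h2 _ hq1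
    have e2 : dot q.1.2 p.1.1 = dot q.2.2 p.2.1 := hq2 _ h1
    have e2' : dot p.1.1 q.1.2 = dot p.2.1 q.2.2 := by
      rw [dot_comm, e2, dot_comm]
    simp only [sf]
    rw [e1, e2']; ring
  · intro h
    have hrefl : (Bf (k := k) n m).IsRefl := by
      intro v w hw; rw [Bf_symm]; exact hw
    constructor
    · -- use biduality
      have key : ((p.1.1, p.2.1) : (Fin n → k) × (Fin m → k)) ∈
          (Bf n m).orthogonal ((Bf n m).orthogonal V) := by
        intro ab hab
        have hab' : ∀ r ∈ V, dot ab.1 r.1 = dot ab.2 r.2 := by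
          intro r hr
          have := hab r hr
          simp only [Bf, LinearMap.BilinForm.IsOrtho, LinearMap.mk₂_apply, sub_eq_zero] at this
          rw [dot_comm ab.1, dot_comm ab.2]; exact this
        have := h ((0, ab.1), (0, ab.2)) ⟨V.zero_mem, hab'⟩
        simp only [sf, dot_zero, zero_dot, LinearMap.BilinForm.IsOrtho] at this ⊢
        simp only [Bf, LinearMap.mk₂_apply, sub_eq_zero]
        rw [dot_comm, dot_comm ab.2]
        linear_combination -this
      rwa [LinearMap.BilinForm.orthogonal_orthogonal Bf_nondeg hrefl] at key
    · intro q hq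
      have := h ((q.1, 0), (q.2, 0)) ⟨hq, fun r _ => by simp [zero_dot]⟩
      simp only [sf, dot_zero, zero_dot] at this
      linear_combination this

end Statement8
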